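/- Let W ∈ ℝ^{m×m} be symmetric and let U_ℓ = Q Σ Rᵀ be a rank-k core SVD of U_ℓ ∈ ℝ^{m×ℓ} with respect to W, i.e. Q ∈ ℝ^{m×k} with Qᵀ W Q = I_k, R ∈ ℝ^{ℓ×k} with Rᵀ R = I_k, and Σ ∈ ℝ^{k×k} diagonal. Let C ∈ ℝ^{m×s} be a matrix of s additional columns whose residuals with respect to Q vanish, i.e. C = Q Qᵀ W C. Let Q̃ Σ̃ R̃ᵀ be a thin SVD of the k×(k+s) matrix [Σ | Qᵀ W C], i.e. Q̃ ∈ ℝ^{k×k} with Q̃ᵀ Q̃ = I_k, Σ̃ ∈ ℝ^{k×k} diagonal with nonnegative entries, and R̃ ∈ ℝ^{(k+s)×k} with R̃ᵀ R̃ = I_k. Then [U_ℓ | C] = (Q Q̃) Σ̃ ( [[R, 0],[0, I_s]] R̃ )ᵀ, and this is a core SVD of U_{ℓ+s} = [U_ℓ | C] with respect to W: (Q Q̃)ᵀ W (Q Q̃) = I_k and ( [[R, 0],[0, I_s]] R̃ )ᵀ ( [[R, 0],[0, I_s]] R̃ ) = I_k. -/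

import Mathlib

open Matrix

noncomputable section

/-- `[A | C]`: the matrix obtained by appending the columns of `C` after those of `A`. -/
def appendCols {m n n' : Type*} (A : Matrix m n ℝ) (C : Matrix m n' ℝ) :
    Matrix m (n ⊕ n') ℝ :=
  Matrix.of fun i => Sum.elim (A i) (C i)

lemma appendCols_eq_fromColumns {m n n' : Type*} (A : Matrix m n ℝ) (C : Matrix m n' ℝ) :
    appendCols A C = fromCols A C := rfl

theorem stmt5 {m ℓ k s : ℕ}
    (W : Matrix (Fin m) (Fin m) ℝ) (hW : W.IsSymm)
    (U : Matrix (Fin m) (Fin ℓ) ℝ)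
    (Q : Matrix (Fin m) (Fin k) ℝ) (σ : Fin k → ℝ)
    (R : Matrix (Fin ℓ) (Fin k) ℝ)
    (hU : U = Q * diagonal σ * Rᵀ)
    (hQ : Qᵀ * W * Q = 1) (hR : Rᵀ * R = 1)
    (C : Matrix (Fin m) (Fin s) ℝ)
    (hC : C = Q * Qᵀ * W * C)
    (Qt : Matrix (Fin k) (Fin k) ℝ) (σt : Fin k → ℝ)
    (Rt : Matrix (Fin k ⊕ Fin s) (Fin k) ℝ)
    (hQt : Qtᵀ * Qt = 1) (hσt : ∀ i, 0 ≤ σt i) (hRt : Rtᵀ * Rt = 1)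
    (hSVD : appendCols (diagonal σ) (Qᵀ * W * C) = Qt * diagonal σt * Rtᵀ) :
    appendCols U C =
      (Q * Qt) * diagonal σt *
        ((fromBlocks R 0 0 1 : Matrix (Fin ℓ ⊕ Fin s) (Fin k ⊕ Fin s) ℝ) * Rt)ᵀ ∧
    (Q * Qt)ᵀ * W * (Q * Qt) = 1 ∧
    ((fromBlocks R 0 0 1 : Matrix (Fin ℓ ⊕ Fin s) (Fin k ⊕ Fin s) ℝ) * Rt)ᵀ *
      ((fromBlocks R 0 0 1 : Matrix (Fin ℓ ⊕ Fin s) (Fin k ⊕ Fin s) ℝ) * Rt) = 1 := by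
  refine ⟨?_, ?_, ?_⟩
  · have key : Q * (Qt * diagonal σt * Rtᵀ) * (fromBlocks R 0 0 1 :
        Matrix (Fin ℓ ⊕ Fin s) (Fin k ⊕ Fin s) ℝ)ᵀ = appendCols U C := by
      rw [← hSVD, appendCols_eq_fromColumns, appendCols_eq_fromColumns,
        fromBlocks_transpose, mul_fromCols, fromCols_mul_fromBlocks]
      simp only [transpose_zero, transpose_one, Matrix.mul_zero, Matrix.mul_one,
        add_zero, zero_add]
      have h1 : Q * (Qᵀ * W * C) = C := by
        conv_rhs => rw [hC]
        simp [Matrix.mul_assoc]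
      rw [h1, hU, Matrix.mul_assoc]
    rw [transpose_mul, ← key]
    simp [Matrix.mul_assoc]
  · calc (Q * Qt)ᵀ * W * (Q * Qt) = Qtᵀ * (Qᵀ * W * Q) * Qt := by
          simp only [transpose_mul, Matrix.mul_assoc]
    _ = 1 := by rw [hQ, Matrix.mul_one, hQt]
  · have hF : (fromBlocks R 0 0 1 : Matrix (Fin ℓ ⊕ Fin s) (Fin k ⊕ Fin s) ℝ)ᵀ *
        (fromBlocks R 0 0 1 : Matrix (Fin ℓ ⊕ Fin s) (Fin k ⊕ Fin s) ℝ) = 1 := by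
      rw [fromBlocks_transpose, fromBlocks_multiply]
      simp [hR, fromBlocks_one]
    rw [transpose_mul, Matrix.mul_assoc,
      ← Matrix.mul_assoc ((fromBlocks R 0 0 1 : Matrix (Fin ℓ ⊕ Fin s) (Fin k ⊕ Fin s) ℝ)ᵀ),
      hF, Matrix.one_mul, hRt]
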